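/- Let n ≥ 1 and k_1, …, k_n ≥ 1 be integers, and define f(s) = n − s − Σ_{l=1}^n 1/(1 + (s−1) + … + (s−1)^{k_l}) for s ≥ 1. If the multiset {k_1, …, k_n} is one of {1,1,1,1} (extended Dynkin graph D̃4), {2,2,2} (Ẽ6), {1,3,3} (Ẽ7), or {1,2,5} (Ẽ8), then s = 2 is the unique solution of f(s) = 0 in [1, ∞). -/

import Mathlib

/-- The function `f(s) = n - s - ∑_{l=1}^n 1/(1 + (s-1) + … + (s-1)^{k_l})`
attached to the star-shaped graph with `n` branches of lengths `k 1, …, k n`. -/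
noncomputable def starFun (n : ℕ) (k : Fin n → ℕ) (s : ℝ) : ℝ :=
  (n : ℝ) - s - ∑ l, (∑ j ∈ Finset.range (k l + 1), (s - 1) ^ j)⁻¹

private lemma aux_e1 : ∀ s : ℝ, ∑ j ∈ Finset.range (1 + 1), (s - 1) ^ j = s := by
  intro s; rw [Finset.sum_range_succ, Finset.sum_range_one]; ring

private lemma aux_e2 : ∀ s : ℝ, ∑ j ∈ Finset.range (2 + 1), (s - 1) ^ j = s ^ 2 - s + 1 := by
  intro s
  rw [Finset.sum_range_succ, Finset.sum_range_succ, Finset.sum_range_one]; ring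

private lemma aux_e3 : ∀ s : ℝ,
    ∑ j ∈ Finset.range (3 + 1), (s - 1) ^ j = s ^ 3 - 2 * s ^ 2 + 2 * s := by
  intro s
  rw [Finset.sum_range_succ, Finset.sum_range_succ, Finset.sum_range_succ,
    Finset.sum_range_one]; ring

private lemma aux_e5 : ∀ s : ℝ, ∑ j ∈ Finset.range (5 + 1), (s - 1) ^ j =
    s ^ 5 - 4 * s ^ 4 + 7 * s ^ 3 - 6 * s ^ 2 + 3 * s := by
  intro s
  rw [Finset.sum_range_succ, Finset.sum_range_succ, Finset.sum_range_succ,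
    Finset.sum_range_succ, Finset.sum_range_succ, Finset.sum_range_one]; ring

private lemma aux1 (s : ℝ) (hs : 1 ≤ s)
    (hf : (4 : ℝ) - s - (s⁻¹ + (s⁻¹ + (s⁻¹ + s⁻¹))) = 0) : s = 2 := by
  have hs0 : (0:ℝ) < s := by linarith
  field_simp at hf
  have h2 : (s - 2) ^ 2 = 0 := by linear_combination -hf
  have := sq_eq_zero_iff.mp h2
  linarith

private lemma aux2 (s : ℝ) (hs : 1 ≤ s)
    (hf : (3:ℝ) - s - ((s^2-s+1)⁻¹ + ((s^2-s+1)⁻¹ + (s^2-s+1)⁻¹)) = 0) : s = 2 := by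
  have hd : (0:ℝ) < s^2-s+1 := by nlinarith [sq_nonneg (s-1), sq_nonneg s]
  have e : (s^2-s+1)⁻¹ * (s^2-s+1) = 1 := inv_mul_cancel₀ hd.ne'
  have h2 : s * (s - 2)^2 = 0 := by linear_combination (-(s^2-s+1)) * hf - 3 * e
  rcases mul_eq_zero.mp h2 with h | h
  · linarith
  · have := sq_eq_zero_iff.mp h; linarith

private lemma aux3 (s : ℝ) (hs : 1 ≤ s)
    (hf : (3:ℝ) - s - (s⁻¹ + ((s^3-2*s^2+2*s)⁻¹ + (s^3-2*s^2+2*s)⁻¹)) = 0) : s = 2 := by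
  have hs0 : (0:ℝ) < s := by linarith
  have hq : (0:ℝ) < s^2-s+1 := by nlinarith [sq_nonneg (s-1), sq_nonneg s]
  have hd : (0:ℝ) < s^3-2*s^2+2*s := by nlinarith [sq_nonneg (s-1)]
  have ea : s⁻¹ * s = 1 := inv_mul_cancel₀ hs0.ne'
  have eb : (s^3-2*s^2+2*s)⁻¹ * (s^3-2*s^2+2*s) = 1 := inv_mul_cancel₀ hd.ne'
  have h2 : s * ((s - 2)^2 * (s^2-s+1)) = 0 := by
    linear_combination (-s*(s^3-2*s^2+2*s)) * hf - s*(s^2-2*s+2) * ea - 2*s * eb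
  rcases mul_eq_zero.mp h2 with h | h
  · linarith
  · rcases mul_eq_zero.mp h with h | h
    · have := sq_eq_zero_iff.mp h; linarith
    · linarith

private lemma aux4 (s : ℝ) (hs : 1 ≤ s)
    (hf : (3:ℝ) - s - (s⁻¹ + ((s^2-s+1)⁻¹ + (s^5-4*s^4+7*s^3-6*s^2+3*s)⁻¹)) = 0) :
    s = 2 := by
  have hs0 : (0:ℝ) < s := by linarith
  have hq : (0:ℝ) < s^2-s+1 := by nlinarith [sq_nonneg (s-1), sq_nonneg s]
  have hd2 : (0:ℝ) < s^5-4*s^4+7*s^3-6*s^2+3*s := by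
    nlinarith [sq_nonneg (s-1), sq_nonneg (s*(s-2)), sq_nonneg (s-2)]
  have hq4 : (0:ℝ) < s^4-3*s^3+4*s^2-2*s+1 := by
    nlinarith [mul_nonneg hq.le (sq_nonneg (s-1))]
  have ea : s⁻¹ * s = 1 := inv_mul_cancel₀ hs0.ne'
  have eb : (s^2-s+1)⁻¹ * (s^2-s+1) = 1 := inv_mul_cancel₀ hq.ne'
  have ec : (s^5-4*s^4+7*s^3-6*s^2+3*s)⁻¹ * (s^5-4*s^4+7*s^3-6*s^2+3*s) = 1 :=
    inv_mul_cancel₀ hd2.ne'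
  have h2 : s * ((s^2-s+1) * ((s - 2)^2 * (s^4-3*s^3+4*s^2-2*s+1))) = 0 := by
    linear_combination (-s*(s^2-s+1)*(s^5-4*s^4+7*s^3-6*s^2+3*s)) * hf
      - s*(s^2-s+1)*(s^2-s+1)*(s^2-3*s+3) * ea - s*(s^2-s+1)*s*(s^2-3*s+3) * eb
      - s*(s^2-s+1) * ec
  rcases mul_eq_zero.mp h2 with h | h
  · linarith
  · rcases mul_eq_zero.mp h with h | h
    · linarith
    · rcases mul_eq_zero.mp h with h | h
      · have := sq_eq_zero_iff.mp h; linarith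
      · linarith

theorem stmt_1 (n : ℕ) (hn : 1 ≤ n) (k : Fin n → ℕ) (hk : ∀ l, 1 ≤ k l)
    (hExt : (List.ofFn k : Multiset ℕ) = {1, 1, 1, 1} ∨
      (List.ofFn k : Multiset ℕ) = {2, 2, 2} ∨
      (List.ofFn k : Multiset ℕ) = {1, 3, 3} ∨
      (List.ofFn k : Multiset ℕ) = {1, 2, 5}) :
    starFun n k 2 = 0 ∧ ∀ s : ℝ, 1 ≤ s → starFun n k s = 0 → s = 2 := by
  have hsum : ∀ s : ℝ, starFun n k s = (n : ℝ) - s -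
      ((List.ofFn k : Multiset ℕ).map
        (fun m => (∑ j ∈ Finset.range (m + 1), (s - 1) ^ j)⁻¹)).sum := by
    intro s
    simp [starFun, Multiset.map_coe, Multiset.sum_coe, List.map_ofFn, List.sum_ofFn,
      Function.comp]
  rcases hExt with h | h | h | h
  · have hn4 : n = 4 := by
      have := congrArg Multiset.card h
      simpa using this
    subst hn4
    rw [h] at hsum
    simp only [Multiset.insert_eq_cons, Multiset.map_cons, Multiset.sum_cons,
      Multiset.map_singleton, Multiset.sum_singleton, aux_e1] at hsum
    refine ⟨by rw [hsum 2]; norm_num, fun s hs hf => ?_⟩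
    rw [hsum s] at hf
    push_cast at hf
    exact aux1 s hs hf
  · have hn3 : n = 3 := by
      have := congrArg Multiset.card h
      simpa using this
    subst hn3
    rw [h] at hsum
    simp only [Multiset.insert_eq_cons, Multiset.map_cons, Multiset.sum_cons,
      Multiset.map_singleton, Multiset.sum_singleton, aux_e2] at hsum
    refine ⟨by rw [hsum 2]; norm_num, fun s hs hf => ?_⟩
    rw [hsum s] at hf
    push_cast at hf
    exact aux2 s hs hf
  · have hn3 : n = 3 := by
      have := congrArg Multiset.card h
      simpa using this
    subst hn3
    rw [h] at hsum
    simp only [Multiset.insert_eq_cons, Multiset.map_cons, Multiset.sum_cons,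
      Multiset.map_singleton, Multiset.sum_singleton, aux_e1, aux_e3] at hsum
    refine ⟨by rw [hsum 2]; norm_num, fun s hs hf => ?_⟩
    rw [hsum s] at hf
    push_cast at hf
    exact aux3 s hs hf
  · have hn3 : n = 3 := by
      have := congrArg Multiset.card h
      simpa using this
    subst hn3
    rw [h] at hsum
    simp only [Multiset.insert_eq_cons, Multiset.map_cons, Multiset.sum_cons,
      Multiset.map_singleton, Multiset.sum_singleton, aux_e1, aux_e2, aux_e5] at hsum
    refine ⟨by rw [hsum 2]; norm_num, fun s hs hf => ?_⟩
    rw [hsum s] at hf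
    push_cast at hf
    exact aux4 s hs hf
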